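/- For the star K_{1,n} (n ≥ 1), the indicated domination number equals n, while the game domination number equals 1; hence γᵢ(K_{1,n}) − γ_g(K_{1,n}) = n − 1 can be arbitrarily large. -/

import Mathlib

open Finset

open scoped Classical

noncomputable section

namespace IndicatedDom

variable {V : Type*} [Fintype V]

/-- Closed neighborhood `N[v]` as a `Finset`. -/
def cnbhd (G : SimpleGraph V) (v : V) : Finset V :=
  insert v (G.neighborFinset v)

/-- `D` is a dominating set of `G`. -/
def Dominates (G : SimpleGraph V) (D : Finset V) : Prop :=
  ∀ u, ∃ v ∈ D, u ∈ cnbhd G v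

/-- The set of vertices not dominated by `D`. -/
def undom (G : SimpleGraph V) (D : Finset V) : Finset V :=
  univ.filter fun u => ∀ v ∈ D, u ∉ cnbhd G v

/-- Game value of the indicated domination game with a fuel parameter:
given the set `D` of vertices selected so far, Dominator indicates an
undominated vertex `u` (minimizing), Staller selects a vertex of `N[u]`
(maximizing); each selection counts one. -/
def giAux (G : SimpleGraph V) : ℕ → Finset V → ℕ
  | 0, _ => 0
  | (fuel+1), D =>
    if h : (undom G D).Nonempty then
      (undom G D).inf' h fun u =>
        (cnbhd G u).sup' ⟨u, Finset.mem_insert_self u _⟩ fun v => giAux G fuel (insert v D) + 1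
    else 0

/-- The indicated domination number `γᵢ(G)`. -/
def indicatedDomNum (G : SimpleGraph V) : ℕ :=
  giAux G (Fintype.card V) ∅

/-- Game value of the standard domination game with a fuel parameter:
`dom = true` means it is Dominator's turn (minimizing); legal moves are
vertices dominating at least one new vertex. -/
def gameAux (G : SimpleGraph V) : ℕ → Bool → Finset V → ℕ
  | 0, _, _ => 0
  | (fuel+1), dom, D =>
    if h : (univ.filter fun v => ∃ u ∈ cnbhd G v, u ∈ undom G D).Nonempty then
      if dom then
        (univ.filter fun v => ∃ u ∈ cnbhd G v, u ∈ undom G D).inf' h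
          fun v => gameAux G fuel false (insert v D) + 1
      else
        (univ.filter fun v => ∃ u ∈ cnbhd G v, u ∈ undom G D).sup' h
          fun v => gameAux G fuel true (insert v D) + 1
    else 0

/-- The game domination number `γ_g(G)` (Dominator starts). -/
def gameDomNum (G : SimpleGraph V) : ℕ :=
  gameAux G (Fintype.card V) true ∅

/-- A minimal dominating set. -/
def IsMinimalDominating (G : SimpleGraph V) (D : Finset V) : Prop :=
  Dominates G D ∧ ∀ D' ⊂ D, ¬ Dominates G D'

/-- The upper domination number `Γ(G)`. -/
def upperDomNum (G : SimpleGraph V) : ℕ :=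
  sSup {k | ∃ D : Finset V, IsMinimalDominating G D ∧ D.card = k}

/-- A dominating (Grundy) sequence: every vertex dominates something new,
and the whole sequence dominates `G`. -/
def IsDominatingSeq (G : SimpleGraph V) (l : List V) : Prop :=
  (∀ i : Fin l.length, ∃ u, u ∈ cnbhd G (l.get i) ∧
      ∀ j : Fin l.length, (j : ℕ) < (i : ℕ) → u ∉ cnbhd G (l.get j)) ∧
    Dominates G l.toFinset

/-- The Grundy domination number `γ_gr(G)`. -/
def grundyDomNum (G : SimpleGraph V) : ℕ :=
  sSup {k | ∃ l : List V, IsDominatingSeq G l ∧ l.length = k}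

/-- The independence number `α(G)`. -/
def indepNum (G : SimpleGraph V) : ℕ :=
  sSup {k | ∃ S : Finset V, (∀ x ∈ S, ∀ y ∈ S, ¬ G.Adj x y) ∧ S.card = k}

/-- `S` is irredundant: every `x ∈ S` has a private neighbor w.r.t. `S`. -/
def Irredundant (G : SimpleGraph V) (S : Finset V) : Prop :=
  ∀ x ∈ S, ∃ w, (∃ v ∈ S, w ∈ cnbhd G v) ∧ ¬ ∃ v ∈ S.erase x, w ∈ cnbhd G v

/-- The upper irredundance number `IR(G)`. -/
def upperIrredNum (G : SimpleGraph V) : ℕ :=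
  sSup {k | ∃ S : Finset V, Irredundant G S ∧ (∀ T, S ⊂ T → ¬ Irredundant G T) ∧ S.card = k}

/-- The star `K_{1,n}` with center `0`. -/
def starGraph (n : ℕ) : SimpleGraph (Fin (n+1)) where
  Adj a b := a ≠ b ∧ (a = 0 ∨ b = 0)
  symm := ⟨by intro a b h; exact ⟨h.1.symm, h.2.symm⟩⟩
  loopless := ⟨by intro a h; exact h.1 rfl⟩

/-- Two copies of `K_n` with a matching joining corresponding vertices of
index `≥ 1` (i.e. `K_n □ K₂` minus the matching edge at index `0`). -/
def Hgraph (n : ℕ) : SimpleGraph (Fin n × Bool) where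
  Adj a b := (a.2 = b.2 ∧ a.1 ≠ b.1) ∨ (a.2 ≠ b.2 ∧ a.1 = b.1 ∧ (a.1 : ℕ) ≠ 0)
  symm := ⟨by
    rintro ⟨i, s⟩ ⟨j, t⟩ (⟨h1, h2⟩ | ⟨h1, h2, h3⟩)
    · exact Or.inl ⟨h1.symm, h2.symm⟩
    · exact Or.inr ⟨h1.symm, h2.symm, h2 ▸ h3⟩⟩
  loopless := ⟨by rintro ⟨i, s⟩ (⟨_, h⟩ | ⟨h, _⟩) <;> exact h rfl⟩

/-- The `k`-th power of the path on `n` vertices: `i ~ j` iff `1 ≤ |i-j| ≤ k`. -/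
def pathPow (n k : ℕ) : SimpleGraph (Fin n) where
  Adj i j := i ≠ j ∧ (i : ℕ) ≤ (j : ℕ) + k ∧ (j : ℕ) ≤ (i : ℕ) + k
  symm := ⟨by intro i j h; exact ⟨h.1.symm, h.2.2, h.2.1⟩⟩
  loopless := ⟨by intro i h; exact h.1 rfl⟩

/-- The cycle on `m` vertices (for `m ≥ 3`), modeled on `ZMod m`. -/
def cyc (m : ℕ) : SimpleGraph (ZMod m) where
  Adj i j := i ≠ j ∧ (i + 1 = j ∨ j + 1 = i)
  symm := ⟨by intro i j h; exact ⟨h.1.symm, h.2.symm⟩⟩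
  loopless := ⟨by intro i h; exact h.1 rfl⟩

/-- The graph `D₁`: a `9`-cycle `x₁x₂…x₉` plus chords `x₁x₃, x₄x₆, x₇x₉`
(vertex `xᵢ` is represented by `i - 1 : ZMod 9`). -/
def DGraph : SimpleGraph (ZMod 9) where
  Adj i j := i ≠ j ∧ (i + 1 = j ∨ j + 1 = i ∨
    (i = 0 ∧ j = 2) ∨ (i = 2 ∧ j = 0) ∨ (i = 3 ∧ j = 5) ∨ (i = 5 ∧ j = 3) ∨
    (i = 6 ∧ j = 8) ∨ (i = 8 ∧ j = 6))
  symm := ⟨by intro i j h; refine ⟨h.1.symm, ?_⟩; tauto⟩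
  loopless := ⟨by intro i h; exact h.1 rfl⟩


lemma mem_cnbhd_self {V : Type*} [Fintype V] {G : SimpleGraph V} (u : V) :
    u ∈ cnbhd G u := by
  rw [cnbhd]; exact Finset.mem_insert_self u _

lemma mem_cnbhd_star {n : ℕ} {u v : Fin (n+1)} :
    u ∈ cnbhd (starGraph n) v ↔ u = v ∨ v = 0 ∨ u = 0 := by
  simp only [cnbhd, Finset.mem_insert, SimpleGraph.mem_neighborFinset]
  constructor
  · rintro (h | h)
    · exact Or.inl h
    · obtain ⟨h1, h2⟩ := h
      tauto
  · rintro (rfl | h | h)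
    · exact Or.inl rfl
    all_goals
      by_cases huv : u = v
      · exact Or.inl huv
      · exact Or.inr ⟨fun e => huv e.symm, by tauto⟩

lemma mem_undom_iff {V : Type*} [Fintype V] {G : SimpleGraph V} {D : Finset V} {u : V} :
    u ∈ undom G D ↔ ∀ v ∈ D, u ∉ cnbhd G v := by
  simp [undom]

lemma undom_star_zero_mem {n : ℕ} {D : Finset (Fin (n+1))} (h : (0 : Fin (n+1)) ∈ D) :
    undom (starGraph n) D = ∅ := by
  rw [Finset.eq_empty_iff_forall_notMem]
  intro u hu
  rw [mem_undom_iff] at hu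
  exact hu 0 h (mem_cnbhd_star.mpr (Or.inr (Or.inl rfl)))

lemma gameAux_star_zero_mem {n : ℕ} {D : Finset (Fin (n+1))} (h : (0 : Fin (n+1)) ∈ D)
    (fuel : ℕ) (b : Bool) : gameAux (starGraph n) fuel b D = 0 := by
  cases fuel with
  | zero => rfl
  | succ f =>
    rw [gameAux, dif_neg]
    rintro ⟨v, hv⟩
    simp only [Finset.mem_filter] at hv
    obtain ⟨-, u, -, hu⟩ := hv
    rw [undom_star_zero_mem h] at hu
    exact Finset.notMem_empty u hu

lemma cnbhd_star_leaf {n : ℕ} {u : Fin (n+1)} (hu : u ≠ 0) :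
    cnbhd (starGraph n) u = {u, 0} := by
  ext w
  simp only [mem_cnbhd_star, Finset.mem_insert, Finset.mem_singleton]
  tauto

lemma cnbhd_star_center {n : ℕ} :
    cnbhd (starGraph n) (0 : Fin (n+1)) = univ := by
  ext w
  simp [mem_cnbhd_star]

lemma giAux_of_undom_empty {V : Type*} [Fintype V] {G : SimpleGraph V} {D : Finset V}
    (h : undom G D = ∅) (fuel : ℕ) : giAux G fuel D = 0 := by
  cases fuel with
  | zero => rfl
  | succ f => simp [giAux, h]

lemma min_succ_sub_one {f a : ℕ} (ha : 1 ≤ a) : min f (a - 1) + 1 = min (f+1) a := by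
  rw [Nat.min_def, Nat.min_def]
  split_ifs <;> omega

lemma giAux_star (n : ℕ) (hn : 1 ≤ n) :
    ∀ fuel (D : Finset (Fin (n+1))), (∀ v ∈ D, v ≠ 0) →
      giAux (starGraph n) fuel D = min fuel (n - D.card) := by
  have hone : ((⟨1, by omega⟩ : Fin (n+1)) : Fin (n+1)) ≠ 0 := by
    intro h
    have := congrArg Fin.val h
    simp at this
  intro fuel
  induction fuel with
  | zero => intro D hD; simp [giAux]
  | succ f ih =>
    intro D hD
    have hDsub : D ⊆ univ.filter (fun v : Fin (n+1) => v ≠ 0) := fun v hv => by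
      simp [hD v hv]
    have hcardfilter : (univ.filter (fun v : Fin (n+1) => v ≠ 0)).card = n := by
      rw [Finset.filter_ne' univ 0, Finset.card_erase_of_mem (Finset.mem_univ 0)]
      simp
    have hDcard : D.card ≤ n :=
      le_of_le_of_eq (Finset.card_le_card hDsub) hcardfilter
    rcases eq_or_lt_of_le hDcard with heq | hlt
    · -- D consists of all leaves; everything is dominated
      have hDeq : D = univ.filter (fun v : Fin (n+1) => v ≠ 0) :=
        Finset.eq_of_subset_of_card_le hDsub (by rw [hcardfilter, heq])
      have hmemD : ∀ w : Fin (n+1), w ≠ 0 → w ∈ D := by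
        intro w hw
        have hwf : w ∈ univ.filter (fun v : Fin (n+1) => v ≠ 0) :=
          Finset.mem_filter.mpr ⟨Finset.mem_univ w, hw⟩
        exact hDeq.symm ▸ hwf
      have hU : undom (starGraph n) D = ∅ := by
        rw [Finset.eq_empty_iff_forall_notMem]
        intro u hu
        rw [mem_undom_iff] at hu
        by_cases hu0 : u = 0
        · exact hu _ (hmemD _ hone) (mem_cnbhd_star.mpr (Or.inr (Or.inr hu0)))
        · exact hu u (hmemD u hu0) (mem_cnbhd_star.mpr (Or.inl rfl))
      rw [giAux_of_undom_empty hU, heq, Nat.sub_self]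
      simp
    · -- there is an undominated leaf
      have hsd : ((univ.filter (fun v : Fin (n+1) => v ≠ 0)) \ D).Nonempty := by
        rw [← Finset.card_pos, Finset.card_sdiff_of_subset hDsub, hcardfilter]
        omega
      obtain ⟨u0, hu0m⟩ := hsd
      rw [Finset.mem_sdiff] at hu0m
      have hu0ne : u0 ≠ 0 := by simpa using hu0m.1
      have hu0D : u0 ∉ D := hu0m.2
      have hmemundom : ∀ u : Fin (n+1), u ≠ 0 → u ∉ D → u ∈ undom (starGraph n) D := by
        intro u hune huD
        rw [mem_undom_iff]
        intro v hv hc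
        rcases mem_cnbhd_star.mp hc with rfl | rfl | h
        · exact huD hv
        · exact hD _ hv rfl
        · exact hune h
      have h : (undom (starGraph n) D).Nonempty := ⟨u0, hmemundom u0 hu0ne hu0D⟩
      rw [giAux, dif_pos h]
      have hinst : (fun a b : Fin (n+1) => Classical.propDecidable (a = b)) =
          instDecidableEqFin (n+1) := Subsingleton.elim _ _
      have hzero_ins : ∀ (E : Finset (Fin (n+1))), (0 : Fin (n+1)) ∈ E →
          ∀ fu, giAux (starGraph n) fu E = 0 := fun E hE fu =>
        giAux_of_undom_empty (undom_star_zero_mem hE) fu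
      have key : ∀ u ∈ undom (starGraph n) D,
          ((cnbhd (starGraph n) u).sup' ⟨u, mem_cnbhd_self u⟩
            fun v => giAux (starGraph n) f (insert v D) + 1) = min (f+1) (n - D.card) := by
        intro u hu
        have huD : u ∉ D := fun hmem =>
          (mem_undom_iff.mp hu) u hmem (mem_cnbhd_self u)
        by_cases hu0 : u = 0
        · -- the indicated vertex is the center, hence D = ∅
          subst hu0
          have hDempty : D = ∅ := by
            rw [Finset.eq_empty_iff_forall_notMem]
            intro v hv
            exact (mem_undom_iff.mp hu) v hv (mem_cnbhd_star.mpr (Or.inr (Or.inr rfl)))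
          subst hDempty
          simp only [Finset.card_empty, Nat.sub_zero]
          have hval : ∀ v : Fin (n+1), v ≠ 0 →
              giAux (starGraph n) f (insert v ∅) + 1 = min (f+1) n := by
            intro v hv
            rw [ih (insert v ∅) (by simpa using hv),
              Finset.card_insert_of_notMem (Finset.notMem_empty v), Finset.card_empty]
            exact min_succ_sub_one hn
          apply le_antisymm
          · apply Finset.sup'_le
            intro v _
            by_cases hv : v = 0
            · subst hv
              rw [hzero_ins _ (Finset.mem_insert_self 0 ∅)]
              omega
            · rw [hval v hv]
          · calc min (f+1) n
                = giAux (starGraph n) f (insert (⟨1, by omega⟩ : Fin (n+1)) ∅) + 1 :=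
                  (hval _ hone).symm
              _ ≤ _ := Finset.le_sup' (fun v => giAux (starGraph n) f (insert v ∅) + 1)
                  (mem_cnbhd_star.mpr (Or.inr (Or.inl rfl)))
        · -- the indicated vertex is a leaf
          have hins : giAux (starGraph n) f (insert u D) + 1 = min (f+1) (n - D.card) := by
            rw [ih (insert u D) (by
              intro v hv
              rcases Finset.mem_insert.mp hv with rfl | hv'
              · exact hu0
              · exact hD v hv'),
              Finset.card_insert_of_notMem huD]
            have e1 : n - (D.card + 1) = (n - D.card) - 1 := by omega
            rw [e1]
            exact min_succ_sub_one (by omega)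
          apply le_antisymm
          · apply Finset.sup'_le
            intro v hv
            rw [cnbhd_star_leaf hu0] at hv
            rcases Finset.mem_insert.mp hv with rfl | hv'
            · rw [hins]
            · rw [Finset.mem_singleton.mp hv',
                hzero_ins _ (Finset.mem_insert_self 0 D)]
              have : 1 ≤ n - D.card := by omega
              omega
          · calc min (f+1) (n - D.card) = giAux (starGraph n) f (insert u D) + 1 := hins.symm
              _ ≤ _ := Finset.le_sup' (fun v => giAux (starGraph n) f (insert v D) + 1)
                  (mem_cnbhd_self u)
      apply le_antisymm
      · obtain ⟨u, hu⟩ := h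
        exact le_of_le_of_eq (Finset.inf'_le _ hu) (by convert key u hu)
      · exact Finset.le_inf' _ _ fun u hu => (by convert (key u hu).ge)

/-- for the star `K_{1,n}` (`n ≥ 1`), `γᵢ = n` and `γ_g = 1`. -/
theorem stmt2 (n : ℕ) (hn : 1 ≤ n) :
    indicatedDomNum (starGraph n) = n ∧ gameDomNum (starGraph n) = 1 := by
  constructor
  · rw [indicatedDomNum, Fintype.card_fin,
      giAux_star n hn (n+1) ∅ (by simp)]
    simp
  · rw [gameDomNum, Fintype.card_fin, gameAux]
    split
    · split
      · refine le_antisymm ?_ (Finset.le_inf' _ _ fun v _ => Nat.le_add_left 1 _)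
        refine le_trans (Finset.inf'_le _ (b := 0) ?_) ?_
        · simp only [Finset.mem_filter]
          exact ⟨Finset.mem_univ 0, 0, mem_cnbhd_self 0, by simp [mem_undom_iff]⟩
        · have hinst : (fun a b : Fin (n+1) => Classical.propDecidable (a = b)) =
              instDecidableEqFin (n+1) := Subsingleton.elim _ _
          rw [gameAux_star_zero_mem (D := @insert _ _ (@instInsert _ fun a b => Classical.propDecidable (a = b)) (0 : Fin (n+1)) ∅) (by simp)]
      · simp_all
    · rename_i hne
      exact absurd ⟨0, by
        simp only [Finset.mem_filter]
        exact ⟨Finset.mem_univ 0, 0, mem_cnbhd_self 0, by simp [mem_undom_iff]⟩⟩ hne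

end IndicatedDom
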